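/- The dual map f̂ : I → I of a cellular automaton is continuous, where I is the space of cylinders plus ⊤ with the topology generated by the sets U_p = {α : [p] ≤ α} for finite patterns p together with {⊤}. -/

import Mathlib

abbrev Cell (d : ℕ) := Fin d → ℤ
abbrev Config (d : ℕ) (S : Type*) := Cell d → S

/-- The shift map `σ_v(x)_u = x_(v+u)`. -/
def shiftMap {d : ℕ} {S : Type*} (v : Cell d) (x : Config d S) : Config d S :=
  fun u => x (v + u)

/-- A cellular automaton: continuous (product topology, `S` discrete) and shift-commuting. -/
def IsCA {d : ℕ} {S : Type*} [TopologicalSpace S] (f : Config d S → Config d S) : Prop :=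
  Continuous f ∧ ∀ v : Cell d, f ∘ shiftMap v = shiftMap v ∘ f

/-- The cylinder of the pattern `p` restricted to domain `D`. -/
def cylinder {d : ℕ} {S : Type*} (D : Set (Cell d)) (p : Cell d → S) : Set (Config d S) :=
  {x | ∀ u ∈ D, x u = p u}

/-- The dual map: intersection of all cylinders (or the empty set)
containing the `f`-preimage of `A`. -/
def dualMap {d : ℕ} {S : Type*} (f : Config d S → Config d S) (A : Set (Config d S)) :
    Set (Config d S) :=
  ⋂₀ {B | ((∃ D p, B = cylinder D p) ∨ B = ∅) ∧ f ⁻¹' A ⊆ B}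

/-- The space `I` of cylinders plus `⊤ = ∅`. -/
def CylOrTop (d : ℕ) (S : Type*) : Type _ :=
  {A : Set (Config d S) // (∃ D p, A = cylinder D p) ∨ A = ∅}

/-- The topology on `I` generated by the sets `U_p = {α | [p] ≤ α}` for finite patterns
`p` (where `[p] ≤ α` means `α ⊆ [p]`, so `⊤ = ∅` lies in every `U_p`), plus `{⊤}`. -/
def cylTopology (d : ℕ) (S : Type*) : TopologicalSpace (CylOrTop d S) :=
  TopologicalSpace.generateFrom
    ({U | ∃ D : Set (Cell d), D.Finite ∧ ∃ p : Cell d → S,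
        U = {α : CylOrTop d S | α.val ⊆ cylinder D p}} ∪
      {{α : CylOrTop d S | α.val = ∅}})

section Aux

variable {d : ℕ} {S : Type*}

/-- `f ⁻¹' A` is contained in its dual. -/
lemma preimage_subset_dualMap (f : Config d S → Config d S) (A : Set (Config d S)) :
    f ⁻¹' A ⊆ dualMap f A := fun x hx B hB => hB.2 hx

/-- Key characterization: the dual lies in a cylinder-or-empty set iff the preimage does. -/
lemma dualMap_subset_iff (f : Config d S → Config d S) (A C : Set (Config d S))
    (hC : (∃ D p, C = cylinder D p) ∨ C = ∅) :
    dualMap f A ⊆ C ↔ f ⁻¹' A ⊆ C := by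
  constructor
  · intro h
    exact (preimage_subset_dualMap f A).trans h
  · intro h
    exact Set.sInter_subset_of_mem ⟨hC, h⟩

lemma cylinder_mono (D E : Set (Cell d)) (p : Cell d → S) (h : E ⊆ D) :
    cylinder D p ⊆ cylinder E p := fun x hx u hu => hx u (h hu)

lemma cylinder_isOpen [TopologicalSpace S] [DiscreteTopology S]
    (D : Set (Cell d)) (hD : D.Finite) (p : Cell d → S) :
    IsOpen (cylinder D p) := by
  have : cylinder D p = ⋂ u ∈ D, (fun x : Config d S => x u) ⁻¹' {p u} := by
    ext x; simp [cylinder]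
  rw [this]
  exact hD.isOpen_biInter fun u _ =>
    (continuous_apply u).isOpen_preimage _ (isOpen_discrete _)

/-- Compactness extraction: if the preimage of a cylinder lies in an open set, then
already the preimage of a finite subcylinder does. -/
lemma exists_finite_subcylinder [Fintype S] [TopologicalSpace S] [DiscreteTopology S]
    (f : Config d S → Config d S) (hf : Continuous f)
    (C : Set (Config d S)) (hC : IsOpen C) (D : Set (Cell d)) (p : Cell d → S)
    (h : f ⁻¹' cylinder D p ⊆ C) :
    ∃ E : Set (Cell d), E ⊆ D ∧ E.Finite ∧ f ⁻¹' cylinder E p ⊆ C := by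
  cases isEmpty_or_nonempty S with
  | inl hS =>
    refine ⟨∅, Set.empty_subset _, Set.finite_empty, fun x _ => ?_⟩
    exact (hS.false (x 0)).elim
  | inr hS =>
    have hcompl : IsCompact Cᶜ := hC.isClosed_compl.isCompact
    set Z : D → Set (Config d S) := fun u => f ⁻¹' {x | x u.1 = p u.1} with hZ
    have hZc : ∀ u : D, IsClosed (Z u) := by
      intro u
      have : Continuous (fun x : Config d S => f x u.1) := (continuous_apply u.1).comp hf
      exact IsClosed.preimage this (isClosed_singleton (x := p u.1))
    have hiInter : (⋂ u : D, Z u) = f ⁻¹' cylinder D p := by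
      ext x
      simp [hZ, cylinder, Set.mem_iInter, Subtype.forall]
    have hempty : Cᶜ ∩ ⋂ u : D, Z u = ∅ := by
      rw [hiInter]
      rw [Set.eq_empty_iff_forall_notMem]
      rintro x ⟨hx1, hx2⟩
      exact hx1 (h hx2)
    obtain ⟨t, ht⟩ := hcompl.elim_finite_subfamily_closed Z hZc hempty
    refine ⟨Subtype.val '' (t : Set D), Set.image_subset_iff.mpr (fun u _ => u.2),
      (t.finite_toSet.image _), ?_⟩
    intro x hx
    by_contra hxC
    have : x ∈ Cᶜ ∩ ⋂ u ∈ t, Z u := by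
      refine ⟨hxC, ?_⟩
      simp only [Set.mem_iInter]
      intro u hu
      exact hx u.1 ⟨u, hu, rfl⟩
    rw [ht] at this
    exact this

/-- The core openness lemma. -/
lemma isOpen_preimage_cond [Fintype S] [TopologicalSpace S] [DiscreteTopology S]
    (f : Config d S → Config d S) (hf : Continuous f)
    (C : Set (Config d S)) (hC : IsOpen C) :
    @IsOpen _ (cylTopology d S) {α : CylOrTop d S | f ⁻¹' α.val ⊆ C} := by
  letI := cylTopology d S
  rw [isOpen_iff_forall_mem_open]
  rintro α hα
  rcases α.property with ⟨D, p, hDp⟩ | hE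
  · obtain ⟨E, hED, hEfin, hEsub⟩ := exists_finite_subcylinder f hf C hC D p (hDp ▸ hα)
    refine ⟨{β : CylOrTop d S | β.val ⊆ cylinder E p}, ?_, ?_, ?_⟩
    · intro β hβ
      exact (Set.preimage_mono hβ).trans hEsub
    · exact TopologicalSpace.GenerateOpen.basic _ (Or.inl ⟨E, hEfin, p, rfl⟩)
    · show α.val ⊆ cylinder E p
      rw [hDp]
      exact cylinder_mono D E p hED
  · refine ⟨{β : CylOrTop d S | β.val = ∅}, ?_, ?_, hE⟩
    · intro β hβ
      simp only [Set.mem_setOf_eq] at hβ ⊢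
      rw [hβ]
      simp
    · exact TopologicalSpace.GenerateOpen.basic _ (Or.inr rfl)

end Aux

/-- The dual map `f̂ : I → I` of a cellular automaton is continuous. -/
theorem stmt8 {d : ℕ} {S : Type*} [Fintype S] [TopologicalSpace S] [DiscreteTopology S]
    (f : Config d S → Config d S) (hf : IsCA f)
    (hcl : ∀ A : Set (Config d S), ((∃ D p, A = cylinder D p) ∨ A = ∅) →
      ((∃ D p, dualMap f A = cylinder D p) ∨ dualMap f A = ∅)) :
    @Continuous _ _ (cylTopology d S) (cylTopology d S)
      (fun α : CylOrTop d S => (⟨dualMap f α.val, hcl α.val α.property⟩ : CylOrTop d S)) := by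
  letI := cylTopology d S
  refine continuous_generateFrom_iff.mpr ?_
  rintro s (⟨D, hD, p, rfl⟩ | hs)
  · have heq : (fun α : CylOrTop d S => (⟨dualMap f α.val, hcl α.val α.property⟩ : CylOrTop d S))
        ⁻¹' {α : CylOrTop d S | α.val ⊆ cylinder D p}
        = {α : CylOrTop d S | f ⁻¹' α.val ⊆ cylinder D p} := by
      ext α
      exact dualMap_subset_iff f α.val _ (Or.inl ⟨D, p, rfl⟩)
    refine (congrArg IsOpen heq).mpr ?_
    exact isOpen_preimage_cond f hf.1 _ (cylinder_isOpen D hD p)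
  · simp only [Set.mem_singleton_iff] at hs
    subst hs
    have heq : (fun α : CylOrTop d S => (⟨dualMap f α.val, hcl α.val α.property⟩ : CylOrTop d S))
        ⁻¹' {α : CylOrTop d S | α.val = ∅}
        = {α : CylOrTop d S | f ⁻¹' α.val ⊆ (∅ : Set (Config d S))} := by
      ext α
      simp only [Set.mem_preimage, Set.mem_setOf_eq, ← Set.subset_empty_iff]
      exact dualMap_subset_iff f α.val _ (Or.inr rfl)
    refine (congrArg IsOpen heq).mpr ?_
    exact isOpen_preimage_cond f hf.1 _ isOpen_empty
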